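/- If a consumption experiment E = ((x^t, m^t), B^t)_{t=1}^T can be rationalized by a quasilinear utility function v(x,m) = u(x) + m (i.e., u(x^t) + m^t ≥ u(x) + m for every (x,m) ∈ B^t and every t), then E satisfies cyclical monotonicity: for every finite sequence of observation indices k_1, ..., k_n ∈ {1,...,T}, the sum over j of [μ^{k_j}(x^{k_j}) − μ^{k_{j+1}}(x^{k_j})] is nonnegative, where k_{n+1} = k_1. -/
import Mathlib


/-- Necessity: if a consumption experiment is rationalized by a quasilinear utility
`v(x,m) = u(x) + m`, then it satisfies cyclical monotonicity. -/
theorem ql_rationalization_implies_cyclical_monotonicity {n T : ℕ} (hT : 0 < T)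
    (X : Set (Fin n → ℝ)) (xs : Fin T → (Fin n → ℝ)) (hxX : ∀ t, xs t ∈ X)
    (μ : Fin T → (Fin n → ℝ) → ℝ)
    (hcont : ∀ t, ContinuousOn (μ t) X)
    (hdecr : ∀ t, ∀ x ∈ X, ∀ y ∈ X, x ≤ y → μ t y ≤ μ t x)
    (u : (Fin n → ℝ) → ℝ)
    (hrat : ∀ t, ∀ x ∈ X, ∀ m : ℝ, m ≤ μ t x → u x + m ≤ u (xs t) + μ t (xs t)) :
    ∀ (N : ℕ) (k : ℕ → Fin T), 0 < N → k N = k 0 →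
      0 ≤ ∑ j ∈ Finset.range N,
        (μ (k j) (xs (k j)) - μ (k (j + 1)) (xs (k j))) := by
  intro N k hN hcyc
  set f : Fin T → ℝ := fun t => u (xs t) + μ t (xs t) with hf
  have key : ∀ j, f (k j) - f (k (j + 1)) ≤
      μ (k j) (xs (k j)) - μ (k (j + 1)) (xs (k j)) := by
    intro j
    have h := hrat (k (j + 1)) (xs (k j)) (hxX (k j)) (μ (k (j + 1)) (xs (k j))) le_rfl
    simp only [hf]
    linarith
  have hsum : ∑ j ∈ Finset.range N, (f (k j) - f (k (j + 1))) ≤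
      ∑ j ∈ Finset.range N, (μ (k j) (xs (k j)) - μ (k (j + 1)) (xs (k j))) :=
    Finset.sum_le_sum fun j _ => key j
  have htel : ∑ j ∈ Finset.range N, (f (k j) - f (k (j + 1))) = f (k 0) - f (k N) :=
    Finset.sum_range_sub' (fun j => f (k j)) N
  rw [htel, hcyc] at hsum
  simpa using hsum
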